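/- Let H ⊂ P^m (m ≥ 2, over ℂ) be a hyperplane and S ⊂ P^m a finite set with exactly one point p of S outside H. Suppose that S ∩ H is exactly the common zero locus inside H of all quadratic forms on H vanishing on S ∩ H, and that S ∩ H imposes independent conditions on quadratic forms on H. Then S is exactly the common zero locus in P^m of all quadratic forms on P^m vanishing on S. -/

import Mathlib

open MvPolynomial Function

/-- Complex projective `n`-space, as the projectivization of `ℂ^{n+1}`. -/
abbrev Pn (n : ℕ) := Projectivization ℂ (Fin (n + 1) → ℂ)

/-- The linear span (as a vector subspace) of a set of projective points. -/
def pspan {V : Type*} [AddCommGroup V] [Module ℂ V] (E : Set (Projectivization ℂ V)) :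
    Submodule ℂ V :=
  Submodule.span ℂ (Projectivization.rep '' E)

/-- `E` minimally spans `q`: `q` lies in the span of `E` but in the span of no proper subset. -/
def MinimallySpans {V : Type*} [AddCommGroup V] [Module ℂ V]
    (E : Set (Projectivization ℂ V)) (q : Projectivization ℂ V) : Prop :=
  q.rep ∈ pspan E ∧ ∀ E' ⊂ E, q.rep ∉ pspan E'

/-- `E ⊂ P^n` imposes `|E|` independent conditions on degree-`t` forms:
the evaluation map from `ℂ[z_0,…,z_n]_t` to `ℂ^E` is surjective. -/
def ImposesIndep (n t : ℕ) (E : Set (Pn n)) : Prop :=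
  Surjective (fun (g : homogeneousSubmodule (Fin (n + 1)) ℂ t) (p : E) =>
    eval (Projectivization.rep (p : Pn n)) (g : MvPolynomial (Fin (n + 1)) ℂ))

/-- The `d`-th power of the linear form with coefficient vector `v`. -/
noncomputable def linPow (n d : ℕ) (v : Fin (n + 1) → ℂ) : MvPolynomial (Fin (n + 1)) ℂ :=
  (∑ i, C (v i) * X i) ^ d

/-- The span of the image under the degree-`d` Veronese embedding of a set `S ⊂ P^n`,
as a subspace of the polynomial ring. -/
noncomputable def veroneseSpan (n d : ℕ) (S : Set (Pn n)) : Submodule ℂ (MvPolynomial (Fin (n + 1)) ℂ) :=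
  Submodule.span ℂ ((fun p : Pn n => linPow n d (Projectivization.rep p)) '' S)

/-- `ν_d(S)` minimally spans the point `q` of `P^r = P(ℂ[z_0,…,z_n]_d)`. -/
def MinSpansVer (n d : ℕ) (S : Set (Pn n))
    (q : Projectivization ℂ (homogeneousSubmodule (Fin (n + 1)) ℂ d)) : Prop :=
  (Projectivization.rep q).1 ∈ veroneseSpan n d S ∧
    ∀ S' ⊂ S, (Projectivization.rep q).1 ∉ veroneseSpan n d S'

/-- `S ⊂ P^m` is in linearly general position: every subset of cardinality at most `m + 1`
is linearly independent. -/
def LGP (m : ℕ) (S : Set (Pn m)) : Prop :=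
  ∀ B ⊆ S, B.Finite → B.ncard ≤ m + 1 →
    LinearIndependent ℂ (fun p : B => Projectivization.rep (p : Pn m))

/-- The evaluation linear map from degree-`t` forms to `ℂ^E`. -/
noncomputable def evalLM (n t : ℕ) (E : Set (Pn n)) :
    homogeneousSubmodule (Fin (n + 1)) ℂ t →ₗ[ℂ] (E → ℂ) where
  toFun g p := eval (Projectivization.rep (p : Pn n)) g.1
  map_add' g₁ g₂ := by funext p; simp
  map_smul' c g := by funext p; simp [MvPolynomial.smul_eval]

/-- part (ii) of the Lemma: with coordinates chosen so that `H = {z_m = 0}`,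
if `S` has exactly one point outside `H`, `S ∩ H` imposes independent conditions on the
quadratic forms of `H`, and `S ∩ H` is exactly the common zero locus inside `H` of the
quadrics of `H` through `S ∩ H`, then `S` is exactly the common zero locus in `P^m` of the
quadrics through `S`. -/
theorem stmt_10 (m : ℕ) (hm : 2 ≤ m) (S : Set (Pn m)) (hS : S.Finite)
    (H : Set (Pn m)) (hH : H = {p : Pn m | Projectivization.rep p (Fin.last m) = 0})
    (h1 : (S \ H).ncard = 1)
    (hind : Surjective (fun (g : homogeneousSubmodule (Fin m) ℂ 2) (p : ↥(S ∩ H)) =>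
      eval (fun i : Fin m => Projectivization.rep (p : Pn m) i.castSucc)
        (g : MvPolynomial (Fin m) ℂ)))
    (hbase : {p : Pn m | p ∈ H ∧ ∀ g ∈ homogeneousSubmodule (Fin m) ℂ 2,
        (∀ a ∈ S ∩ H, eval (fun i : Fin m => Projectivization.rep a i.castSucc) g = 0) →
          eval (fun i : Fin m => Projectivization.rep p i.castSucc) g = 0} = S ∩ H) :
    {p : Pn m | ∀ g ∈ homogeneousSubmodule (Fin (m + 1)) ℂ 2,
        (∀ a ∈ S, eval (Projectivization.rep a) g = 0) →
          eval (Projectivization.rep p) g = 0} = S := by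
  -- the unique point of S outside H
  obtain ⟨q, hq⟩ := Set.ncard_eq_one.mp h1
  have hqS : q ∈ S ∧ q ∉ H := by
    have : q ∈ S \ H := hq ▸ rfl
    exact ⟨this.1, this.2⟩
  have hqlast : Projectivization.rep q (Fin.last m) ≠ 0 := by
    intro h0
    exact hqS.2 (hH ▸ (h0 : q ∈ {p : Pn m | Projectivization.rep p (Fin.last m) = 0}))
  ext p
  simp only [Set.mem_setOf_eq]
  constructor
  · intro hp
    by_cases hpH : Projectivization.rep p (Fin.last m) = 0
    · -- p ∈ H: use hbase
      have key : ∀ g ∈ homogeneousSubmodule (Fin m) ℂ 2,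
          (∀ a ∈ S ∩ H, eval (fun i : Fin m => Projectivization.rep a i.castSucc) g = 0) →
          eval (fun i : Fin m => Projectivization.rep p i.castSucc) g = 0 := by
        intro g hg hgS
        set c : ℂ := eval (fun i : Fin m => Projectivization.rep q i.castSucc) g /
          (Projectivization.rep q (Fin.last m))^2 with hc
        set G : MvPolynomial (Fin (m+1)) ℂ :=
          rename Fin.castSucc g - C c * (X (Fin.last m))^2 with hGdef
        have hG2 : G ∈ homogeneousSubmodule (Fin (m+1)) ℂ 2 := by
          rw [mem_homogeneousSubmodule]
          refine IsHomogeneous.sub ?_ ?_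
          · rw [mem_homogeneousSubmodule] at hg
            exact hg.rename_isHomogeneous
          · simpa using (isHomogeneous_C (Fin (m+1)) c).mul
              ((isHomogeneous_X ℂ (Fin.last m)).pow 2)
        have hGA : ∀ a ∈ S, eval (Projectivization.rep a) G = 0 := by
          intro a haS
          by_cases haH : a ∈ H
          · have halast : Projectivization.rep a (Fin.last m) = 0 := by
              rw [hH] at haH; exact haH
            have := hgS a ⟨haS, haH⟩
            simp only [hGdef, map_sub, eval_mul, eval_C, eval_pow, eval_X, eval_rename,
              halast]
            simpa [Function.comp_def] using this
          · have : a = q := by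
              have : a ∈ S \ H := ⟨haS, haH⟩
              rw [hq] at this; exact this
            subst this
            simp only [hGdef, map_sub, eval_mul, eval_C, eval_pow, eval_X, eval_rename, hc]
            rw [div_mul_cancel₀ _ (pow_ne_zero 2 hqlast)]
            simp [Function.comp_def]
        have h0 := hp G hG2 hGA
        simp only [hGdef, map_sub, eval_mul, eval_C, eval_pow, eval_X, eval_rename,
          hpH] at h0
        simpa [Function.comp_def] using h0
      have hpSH : p ∈ S ∩ H := by
        rw [← hbase]
        refine ⟨?_, key⟩
        rw [hH]; exact hpH
      exact hpSH.1
    · -- p ∉ H: p must be q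
      have hplin : ∀ i j : Fin (m+1),
          Projectivization.rep q j * Projectivization.rep p i =
          Projectivization.rep q i * Projectivization.rep p j := by
        intro i j
        set G : MvPolynomial (Fin (m+1)) ℂ :=
          X (Fin.last m) * (C (Projectivization.rep q j) * X i -
            C (Projectivization.rep q i) * X j) with hGdef
        have hG2 : G ∈ homogeneousSubmodule (Fin (m+1)) ℂ 2 := by
          rw [mem_homogeneousSubmodule]
          have h1' : (C (Projectivization.rep q j) * X i -
              C (Projectivization.rep q i) * X j :
              MvPolynomial (Fin (m+1)) ℂ).IsHomogeneous 1 := by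
            refine IsHomogeneous.sub ?_ ?_ <;>
              simpa using (isHomogeneous_C (Fin (m+1)) _).mul (isHomogeneous_X ℂ _)
          simpa using (isHomogeneous_X ℂ (Fin.last m)).mul h1'
        have hGA : ∀ a ∈ S, eval (Projectivization.rep a) G = 0 := by
          intro a haS
          by_cases haH : a ∈ H
          · have halast : Projectivization.rep a (Fin.last m) = 0 := by
              rw [hH] at haH; exact haH
            simp [hGdef, halast]
          · have : a = q := by
              have : a ∈ S \ H := ⟨haS, haH⟩
              rw [hq] at this; exact this
            subst this
            simp only [hGdef, eval_mul, eval_sub, eval_C, eval_X]; ring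
        have h0 := hp G hG2 hGA
        simp only [hGdef, eval_mul, eval_sub, eval_C, eval_X] at h0
        have := mul_eq_zero.mp h0
        rcases this with h | h
        · exact absurd h hpH
        · linear_combination h
      -- conclude p = q
      set t : ℂ := Projectivization.rep p (Fin.last m) / Projectivization.rep q (Fin.last m)
        with ht
      have hrep : t • Projectivization.rep q = Projectivization.rep p := by
        funext i
        have := hplin i (Fin.last m)
        rw [Pi.smul_apply, smul_eq_mul, ht, div_mul_eq_mul_div, div_eq_iff hqlast]
        linear_combination -this
      have hpq : p = q := by
        rw [← Projectivization.mk_rep p, ← Projectivization.mk_rep q]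
        rw [Projectivization.mk_eq_mk_iff' ℂ _ _ (Projectivization.rep_nonzero p)
          (Projectivization.rep_nonzero q)]
        exact ⟨t, hrep⟩
      exact hpq ▸ hqS.1
  · intro hpS g hg hgS
    exact hgS p hpS
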